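/- Let p be a prime and let g(x) = b_e x^e + b_{e-1} x^{e-1} + ⋯ + b_0 ∈ ℚ[x] have degree e ≥ 1 with b_0 ≠ 0, ν_p(b_e) = 0, and ν_p(b_i) ≥ 1 for every 0 ≤ i ≤ e−1 with b_i ≠ 0. Suppose NP_p(g) has successive vertices (0,0), (e−m_1, ν_p(b_{m_1})), …, (e−m_{t−1}, ν_p(b_{m_{t−1}})), (e, ν_p(b_0)), where e = m_0 > m_1 > ⋯ > m_t = 0, and set λ_i = (ν_p(b_{m_i}) − ν_p(b_{m_{i−1}}))/(m_{i−1} − m_i) for 1 ≤ i ≤ t. Let f(x) = a_d x^d + ⋯ + a_0 ∈ ℚ[x] have degree d ≥ 1 with ν_p(a_d) = 0, and let λ = min{ ν_p(a_i)/(d−i) : 0 ≤ i < d, a_i ≠ 0 } be the slope of the first edge of NP_p(f). Assume λ ≥ λ_1 and that one of the following holds: (i) ν_p(b_0) < λ_1(d+e−1); (ii) ν_p(b_0) = λ_1(d+e−1) and moreover either f(0) = 0, or ν_p(f(0)) > dλ, or λ > λ_1. Then for every integer n ≥ 1, the Newton polygon NP_p(g(f^n(x))) of the composition g ∘ f^n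 has successive vertices (0,0), (d^n(e−m_1), ν_p(b_{m_1})), …, (d^n(e−m_{t−1}), ν_p(b_{m_{t−1}})), (d^n e, ν_p(b_0)). -/

import Mathlib

open Polynomial

/-- The `n`-th compositional iterate of `f`: `f^0 = X`, `f^{n+1} = f ∘ f^n`. -/
noncomputable def polyIter (f : Polynomial ℚ) : ℕ → Polynomial ℚ
  | 0 => Polynomial.X
  | n + 1 => f.comp (polyIter f n)

/-- The `p`-adic valuation of a rational number, viewed as a rational number. -/
def nuQ (p : ℕ) (x : ℚ) : ℚ := (padicValRat p x : ℚ)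

/-- `NP_p(h)` has successive vertices `(xs 0, ys 0), …, (xs t, ys t)`:
the corresponding coefficients are nonzero and have the prescribed valuations,
the slopes are strictly increasing, and every point of the Newton diagram lies
on or above the polygon. -/
def HasNPVertices (p : ℕ) (h : Polynomial ℚ) (t : ℕ) (xs : ℕ → ℕ) (ys : ℕ → ℚ) : Prop :=
  h.coeff 0 ≠ 0 ∧
  xs 0 = 0 ∧ xs t = h.natDegree ∧
  (∀ s, s < t → xs s < xs (s + 1)) ∧
  (∀ s, s ≤ t → h.coeff (h.natDegree - xs s) ≠ 0 ∧
      nuQ p (h.coeff (h.natDegree - xs s)) = ys s) ∧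
  (∀ s, 1 ≤ s → s < t →
      (ys s - ys (s - 1)) / ((xs s : ℚ) - (xs (s - 1) : ℚ)) <
        (ys (s + 1) - ys s) / ((xs (s + 1) : ℚ) - (xs s : ℚ))) ∧
  (∀ s, 1 ≤ s → s ≤ t → ∀ i, h.coeff i ≠ 0 →
      xs (s - 1) ≤ h.natDegree - i → h.natDegree - i ≤ xs s →
      ys (s - 1) + ((ys s - ys (s - 1)) / ((xs s : ℚ) - (xs (s - 1) : ℚ))) *
          (((h.natDegree - i : ℕ) : ℚ) - (xs (s - 1) : ℚ)) ≤ nuQ p (h.coeff i))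

/-- The number of irreducible factors of a polynomial over `ℚ`,
counted with multiplicity. -/
noncomputable def numFactors (P : Polynomial ℚ) : ℕ :=
  (UniqueFactorizationMonoid.factors P).card

/-- `f` is `p^r`-pure. -/
def IsPpure (p r : ℕ) (f : Polynomial ℚ) : Prop :=
  f.coeff 0 ≠ 0 ∧
  padicValRat p f.leadingCoeff = 0 ∧
  padicValRat p (f.coeff 0) = (r : ℤ) ∧
  ∀ i, 0 < i → i < f.natDegree → f.coeff i ≠ 0 →
    (r : ℚ) / (f.natDegree : ℚ) ≤ nuQ p (f.coeff i) / ((f.natDegree : ℚ) - (i : ℚ))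

/-! ### Auxiliary valuation lemmas -/

section AV
variable (p : ℕ) [hp : Fact p.Prime]

/-- `x` is zero or has valuation at least `c`. -/
def AV (c : ℚ) (x : ℚ) : Prop := x = 0 ∨ c ≤ nuQ p x
/-- `x` is zero or has valuation greater than `c`. -/
def SA (c : ℚ) (x : ℚ) : Prop := x = 0 ∨ c < nuQ p x

variable {p}

set_option linter.unusedSectionVars false

lemma nuQ_mul {x y : ℚ} (hx : x ≠ 0) (hy : y ≠ 0) : nuQ p (x*y) = nuQ p x + nuQ p y := by
  unfold nuQ; rw [padicValRat.mul hx hy]; push_cast; ring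

lemma nuQ_pow {x : ℚ} (hx : x ≠ 0) (k : ℕ) : nuQ p (x^k) = k * nuQ p x := by
  unfold nuQ; rw [padicValRat.pow x]; push_cast; ring

lemma AV_zero (c : ℚ) : AV p c 0 := Or.inl rfl

lemma AV_mono {c c' x : ℚ} (h : c' ≤ c) (hx : AV p c x) : AV p c' x :=
  hx.imp id fun h2 => le_trans h h2

lemma SA_mono {c c' x : ℚ} (h : c' ≤ c) (hx : SA p c x) : SA p c' x :=
  hx.imp id fun h2 => lt_of_le_of_lt h h2

lemma SA_to_AV {c x : ℚ} (hx : SA p c x) : AV p c x := hx.imp id le_of_lt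

lemma nuQ_add_min {x y : ℚ} (h : x + y ≠ 0) :
    min (nuQ p x) (nuQ p y) ≤ nuQ p (x + y) := by
  unfold nuQ
  have := padicValRat.min_le_padicValRat_add (p := p) h
  calc min ((padicValRat p x : ℚ)) ((padicValRat p y : ℚ))
      = ((min (padicValRat p x) (padicValRat p y) : ℤ) : ℚ) := by push_cast; ring
    _ ≤ _ := by exact_mod_cast this

lemma AV_add {c x y : ℚ} (hx : AV p c x) (hy : AV p c y) : AV p c (x + y) := by
  rcases hx with rfl | hx; · simpa using hy
  rcases hy with rfl | hy; · rw [add_zero]; exact Or.inr hx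
  by_cases h : x + y = 0
  · exact Or.inl h
  · exact Or.inr (le_trans (le_min hx hy) (nuQ_add_min h))

lemma SA_add {c x y : ℚ} (hx : SA p c x) (hy : SA p c y) : SA p c (x + y) := by
  rcases hx with rfl | hx; · simpa using hy
  rcases hy with rfl | hy; · rw [add_zero]; exact Or.inr hx
  by_cases h : x + y = 0
  · exact Or.inl h
  · exact Or.inr (lt_of_lt_of_le (lt_min hx hy) (nuQ_add_min h))

lemma AV_mul {c c' x y : ℚ} (hx : AV p c x) (hy : AV p c' y) : AV p (c + c') (x * y) := by
  rcases hx with rfl | hx; · exact Or.inl (zero_mul y)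
  rcases hy with rfl | hy; · exact Or.inl (mul_zero x)
  by_cases h0x : x = 0; · exact Or.inl (by rw [h0x, zero_mul])
  by_cases h0y : y = 0; · exact Or.inl (by rw [h0y, mul_zero])
  exact Or.inr (by rw [nuQ_mul h0x h0y]; exact add_le_add hx hy)

lemma SA_mul_AV {c c' x y : ℚ} (hx : SA p c x) (hy : AV p c' y) : SA p (c + c') (x * y) := by
  rcases hx with rfl | hx; · exact Or.inl (zero_mul y)
  rcases hy with rfl | hy; · exact Or.inl (mul_zero x)
  by_cases h0x : x = 0; · exact Or.inl (by rw [h0x, zero_mul])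
  by_cases h0y : y = 0; · exact Or.inl (by rw [h0y, mul_zero])
  exact Or.inr (by rw [nuQ_mul h0x h0y]; exact add_lt_add_of_lt_of_le hx hy)

lemma AV_sum {c : ℚ} {α : Type*} (s : Finset α) (f : α → ℚ)
    (h : ∀ i ∈ s, AV p c (f i)) : AV p c (∑ i ∈ s, f i) := by
  classical
  induction s using Finset.induction_on with
  | empty => simpa using AV_zero c
  | insert _ _ hni ih =>
      rename_i a s'
      rw [Finset.sum_insert hni]
      exact AV_add (h a (Finset.mem_insert_self a s'))
        (ih fun i hi => h i (Finset.mem_insert_of_mem hi))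

lemma SA_sum {c : ℚ} {α : Type*} (s : Finset α) (f : α → ℚ)
    (h : ∀ i ∈ s, SA p c (f i)) : SA p c (∑ i ∈ s, f i) := by
  classical
  induction s using Finset.induction_on with
  | empty => exact Or.inl (by simp)
  | insert _ _ hni ih =>
      rename_i a s'
      rw [Finset.sum_insert hni]
      exact SA_add (h a (Finset.mem_insert_self a s'))
        (ih fun i hi => h i (Finset.mem_insert_of_mem hi))

lemma exact_add_SA {c x y : ℚ} (hx : x ≠ 0) (hv : nuQ p x = c) (hy : SA p c y) :
    x + y ≠ 0 ∧ nuQ p (x + y) = c := by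
  rcases hy with rfl | hy
  · simpa using ⟨hx, hv⟩
  by_cases h0y : y = 0
  · simp [h0y, hx, hv]
  have hxy : x + y ≠ 0 := by
    intro h
    have : y = -x := by linarith [h]
    rw [this] at hy
    have : nuQ p (-x) = nuQ p x := by unfold nuQ; rw [padicValRat.neg]
    rw [this, hv] at hy; exact lt_irrefl c hy
  have heq : padicValRat p (x + y) = padicValRat p x := by
    apply padicValRat.add_eq_of_lt hxy hx h0y
    have : (padicValRat p x : ℚ) < (padicValRat p y : ℚ) := by
      rw [show ((padicValRat p x : ℤ):ℚ) = nuQ p x from rfl, hv]; exact hy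
    exact_mod_cast this
  exact ⟨hxy, by unfold nuQ at *; rw [heq]; exact hv⟩

/-- exact valuation of a finite sum with a dominant term -/
lemma exact_sum {c : ℚ} {α : Type*} [DecidableEq α] (s : Finset α) (f : α → ℚ) (j : α)
    (hj : j ∈ s) (hfj : f j ≠ 0) (hv : nuQ p (f j) = c)
    (h : ∀ i ∈ s, i ≠ j → SA p c (f i)) :
    (∑ i ∈ s, f i) ≠ 0 ∧ nuQ p (∑ i ∈ s, f i) = c := by
  rw [← Finset.add_sum_erase s f hj]
  exact exact_add_SA hfj hv (SA_sum _ _ fun i hi => h i (Finset.mem_of_mem_erase hi)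
    (Finset.ne_of_mem_erase hi))

end AV

/-! ### Coefficient bounds for powers, compositions and iterates -/

section Poly
variable {p : ℕ} [hp : Fact p.Prime]
set_option linter.unusedSectionVars false
set_option linter.unusedVariables false

lemma comp_coeff_sum (g H : Polynomial ℚ) (k : ℕ) :
    (g.comp H).coeff k = ∑ i ∈ Finset.range (g.natDegree + 1), g.coeff i * (H ^ i).coeff k := by
  rw [comp_eq_sum_left, Polynomial.sum_over_range g (by simp), finset_sum_coeff]
  refine Finset.sum_congr rfl fun i _ => ?_
  rw [coeff_C_mul]

lemma pow_coeff_AV {H : Polynomial ℚ} {D : ℕ} {μ : ℚ} (hμ : 0 ≤ μ)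
    (hH : ∀ k : ℕ, AV p (μ * ((D:ℚ) - (k:ℚ))) (H.coeff k)) :
    ∀ (j k : ℕ), AV p (μ * ((j:ℚ) * (D:ℚ) - (k:ℚ))) ((H ^ j).coeff k) := by
  intro j
  induction j with
  | zero =>
      intro k
      rcases Nat.eq_zero_or_pos k with rfl | hk
      · right
        simp [nuQ, padicValRat.one]
      · left
        rw [pow_zero, coeff_one, if_neg (by omega)]
  | succ j ih =>
      intro k
      rw [pow_succ, coeff_mul]
      apply AV_sum
      rintro ⟨a, b⟩ hab
      have hab' : a + b = k := Finset.HasAntidiagonal.mem_antidiagonal.mp hab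
      have := AV_mul (ih a) (hH b)
      apply AV_mono (le_of_eq ?_) this
      push_cast [← hab']
      ring

variable {f : Polynomial ℚ} {d : ℕ} {lam : ℚ}

lemma comp_coeff_bound (hfd : f.natDegree = d) (hd1 : 1 ≤ d) (hlam0 : 0 ≤ lam)
    (hf : ∀ j : ℕ, AV p (lam * ((d:ℚ) - (j:ℚ))) (f.coeff j))
    {H : Polynomial ℚ} {D : ℕ} {μ : ℚ}
    (hdeg : H.natDegree ≤ D) (hμ : 0 ≤ μ) (hμd : μ * (D:ℚ) ≤ lam * (d:ℚ))
    (hH : ∀ k : ℕ, AV p (μ * ((D:ℚ) - (k:ℚ))) (H.coeff k)) :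
    ∀ k : ℕ, AV p ((μ/(d:ℚ)) * ((d:ℚ)*(D:ℚ) - (k:ℚ))) ((f.comp H).coeff k) := by
  intro k
  rw [comp_coeff_sum]
  apply AV_sum
  intro i hi
  have hid : i ≤ d := by
    have := Finset.mem_range.mp hi; omega
  by_cases hk : k ≤ i * D
  · have h1 := AV_mul (hf i) (pow_coeff_AV hμ hH i k)
    apply AV_mono ?_ h1
    have hdq : (0:ℚ) < (d:ℚ) := by exact_mod_cast hd1
    rw [div_mul_eq_mul_div, div_le_iff₀ hdq]
    have hidq : (i:ℚ) ≤ (d:ℚ) := by exact_mod_cast hid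
    have hkq : (k:ℚ) ≤ (i:ℚ) * (D:ℚ) := by exact_mod_cast hk
    nlinarith [mul_nonneg (sub_nonneg.2 hidq) (sub_nonneg.2 hμd),
      mul_nonneg (mul_nonneg hμ (sub_nonneg.2 hkq))
        (sub_nonneg.2 (show (1:ℚ) ≤ (d:ℚ) by exact_mod_cast hd1))]
  · left
    have : (H ^ i).natDegree < k := by
      calc (H ^ i).natDegree = i * H.natDegree := natDegree_pow H i
        _ ≤ i * D := Nat.mul_le_mul_left i hdeg
        _ < k := by omega
    rw [coeff_eq_zero_of_natDegree_lt this, mul_zero]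

lemma polyIter_one (f : Polynomial ℚ) : polyIter f 1 = f := by
  show f.comp (polyIter f 0) = f
  show f.comp X = f
  exact comp_X

lemma f_nonzero (hfd : f.natDegree = d) (hd1 : 1 ≤ d) : f ≠ 0 := by
  intro h; rw [h, natDegree_zero] at hfd; omega

lemma iter_bound (hfd : f.natDegree = d) (hd1 : 1 ≤ d) (hlam0 : 0 ≤ lam)
    (hf : ∀ j : ℕ, AV p (lam * ((d:ℚ) - (j:ℚ))) (f.coeff j))
    (hlead : nuQ p f.leadingCoeff = 0) :
    ∀ n : ℕ, 1 ≤ n →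
      (polyIter f n).natDegree = d ^ n ∧
      nuQ p (polyIter f n).leadingCoeff = 0 ∧
      ∀ k : ℕ, AV p ((lam * (d:ℚ) / ((d^n : ℕ):ℚ)) * (((d^n : ℕ):ℚ) - (k:ℚ)))
        ((polyIter f n).coeff k) := by
  intro n
  induction n with
  | zero => omega
  | succ n ih =>
      intro _
      rcases Nat.eq_zero_or_pos n with rfl | hn
      · rw [polyIter_one]
        refine ⟨by simpa using hfd, hlead, fun k => ?_⟩
        apply AV_mono (le_of_eq ?_) (hf k)
        have : ((d^1 : ℕ):ℚ) = (d:ℚ) := by push_cast; ring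
        rw [this, mul_div_assoc, div_self (by positivity), mul_one]
      · obtain ⟨hdeg, hl, hb⟩ := ih hn
        set F := polyIter f n with hF
        have hFdeg0 : F.natDegree ≠ 0 := by rw [hdeg]; positivity
        have hdn : (0:ℚ) < ((d^n : ℕ):ℚ) := by
          have : 1 ≤ d^n := Nat.one_le_pow n d (by omega)
          exact_mod_cast this
        have hstep : polyIter f (n+1) = f.comp F := rfl
        have hdeg' : (polyIter f (n+1)).natDegree = d ^ (n+1) := by
          rw [hstep, natDegree_comp, hfd, hdeg, pow_succ']
        refine ⟨hdeg', ?_, ?_⟩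
        · rw [hstep, leadingCoeff_comp hFdeg0]
          have hfne : f.leadingCoeff ≠ 0 := leadingCoeff_ne_zero.2 (f_nonzero hfd hd1)
          have hFne : F.leadingCoeff ≠ 0 := leadingCoeff_ne_zero.2 (by
            intro h; rw [h, natDegree_zero] at hFdeg0; exact hFdeg0 rfl)
          rw [nuQ_mul hfne (pow_ne_zero _ hFne), nuQ_pow hFne, hlead, hl, hfd]
          ring
        · intro k
          have hcb := comp_coeff_bound hfd hd1 hlam0 hf (le_of_eq hdeg)
            (μ := lam * (d:ℚ) / ((d^n : ℕ):ℚ)) (by positivity)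
            (by rw [div_mul_cancel₀]; exact ne_of_gt hdn) hb k
          rw [hstep]
          apply AV_mono (le_of_eq ?_) hcb
          have h1 : ((d^(n+1) : ℕ):ℚ) = (d:ℚ) * ((d^n : ℕ):ℚ) := by push_cast; ring
          rw [h1, div_div, mul_comm ((d:ℚ)) (((d^n:ℕ):ℚ))]

lemma eval_SA (hfd : f.natDegree = d) (hd1 : 1 ≤ d) (hlam0 : 0 ≤ lam)
    (hf : ∀ j : ℕ, AV p (lam * ((d:ℚ) - (j:ℚ))) (f.coeff j))
    (hc : SA p ((d:ℚ) * lam) (f.coeff 0)) (x : ℚ)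
    (hx : SA p ((d:ℚ) * lam) x) :
    SA p ((d:ℚ) * lam) (f.eval x) := by
  rw [eval_eq_sum_range, hfd]
  apply SA_sum
  intro j hj
  have hjd : j ≤ d := by have := Finset.mem_range.mp hj; omega
  rcases Nat.eq_zero_or_pos j with rfl | hj1
  · simpa [pow_zero] using hc
  · rcases hx with rfl | hx
    · left; rw [zero_pow (by omega), mul_zero]
    · by_cases hx0 : x = 0
      · left; rw [hx0, zero_pow (by omega), mul_zero]
      · have hxj : SA p ((j:ℚ) * ((d:ℚ)*lam)) (x ^ j) := by
          right
          rw [nuQ_pow hx0]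
          have hjq : (0:ℚ) < (j:ℚ) := by exact_mod_cast hj1
          exact (mul_lt_mul_iff_right₀ hjq).2 hx
        have := SA_mul_AV hxj (hf j)
        have h2 : SA p ((j:ℚ)*((d:ℚ)*lam) + lam*((d:ℚ)-(j:ℚ))) (f.coeff j * x^j) := by
          rwa [mul_comm (x^j) (f.coeff j)] at this
        apply SA_mono ?_ h2
        have hjq : (1:ℚ) ≤ (j:ℚ) := by exact_mod_cast hj1
        have hdq : (1:ℚ) ≤ (d:ℚ) := by exact_mod_cast hd1
        nlinarith [mul_nonneg (mul_nonneg hlam0 (by linarith : (0:ℚ) ≤ (j:ℚ)))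
          (by linarith : (0:ℚ) ≤ (d:ℚ) - 1)]

lemma iter_const (hfd : f.natDegree = d) (hd1 : 1 ≤ d) (hlam0 : 0 ≤ lam)
    (hf : ∀ j : ℕ, AV p (lam * ((d:ℚ) - (j:ℚ))) (f.coeff j))
    (hc : SA p ((d:ℚ) * lam) (f.coeff 0)) :
    ∀ n : ℕ, 1 ≤ n → SA p ((d:ℚ) * lam) ((polyIter f n).coeff 0) := by
  intro n
  induction n with
  | zero => omega
  | succ n ih =>
      intro _
      rcases Nat.eq_zero_or_pos n with rfl | hn
      · rw [polyIter_one]; exact hc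
      · have hstep : polyIter f (n+1) = f.comp (polyIter f n) := rfl
        rw [hstep, coeff_zero_eq_eval_zero, eval_comp, ← coeff_zero_eq_eval_zero]
        exact eval_SA hfd hd1 hlam0 hf hc _ (ih hn)

end Poly

/-! ### Abstract Newton-polygon geometry -/

/-- slope of the `s`-th edge. -/
noncomputable def slopeNP (X Y : ℕ → ℚ) (s : ℕ) : ℚ := (Y s - Y (s-1)) / (X s - X (s-1))
/-- line through the `s`-th edge. -/
noncomputable def lineNP (X Y : ℕ → ℚ) (s : ℕ) (z : ℚ) : ℚ :=
  Y (s-1) + slopeNP X Y s * (z - X (s-1))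

section Geometry
variable {t : ℕ} {X Y : ℕ → ℚ}
variable (hX : ∀ s, s < t → X s < X (s+1))
set_option linter.unusedSectionVars false

include hX

lemma npXmono : ∀ a b, a ≤ b → b ≤ t → X a ≤ X b := by
  intro a b hab hbt
  induction b with
  | zero => simp_all
  | succ b ih =>
      rcases Nat.le_succ_iff.mp hab with h | h
      · exact le_trans (ih h (by omega)) (le_of_lt (hX b (by omega)))
      · rw [h]

lemma npDenomPos : ∀ s, 1 ≤ s → s ≤ t → 0 < X s - X (s-1) := by
  intro s h1 h2
  have := hX (s-1) (by omega)
  have hs : s - 1 + 1 = s := by omega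
  rw [hs] at this
  linarith

lemma npLineAlt : ∀ s, 1 ≤ s → s ≤ t → ∀ z,
    lineNP X Y s z = Y s + slopeNP X Y s * (z - X s) := by
  intro s h1 h2 z
  have hd := npDenomPos hX s h1 h2
  have : slopeNP X Y s * (X s - X (s-1)) = Y s - Y (s-1) := by
    rw [slopeNP, div_mul_cancel₀ _ (ne_of_gt hd)]
  simp only [lineNP]; linarith [this, mul_sub (slopeNP X Y s) (z - X (s-1)) (z - X s)]

variable (hslope : ∀ s, 1 ≤ s → s < t → slopeNP X Y s < slopeNP X Y (s+1))
include hslope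

lemma npSlopeMono : ∀ a b, 1 ≤ a → a ≤ b → b ≤ t → slopeNP X Y a ≤ slopeNP X Y b := by
  intro a b h1 hab hbt
  induction b with
  | zero => omega
  | succ b ih =>
      rcases Nat.le_succ_iff.mp hab with h | h
      · exact le_trans (ih h (by omega)) (le_of_lt (hslope b (by omega) (by omega)))
      · rw [h]

lemma npSlopeMonoStrict : ∀ a b, 1 ≤ a → a < b → b ≤ t → slopeNP X Y a < slopeNP X Y b := by
  intro a b h1 hab hbt
  calc slopeNP X Y a ≤ slopeNP X Y (b-1) :=
        npSlopeMono hX hslope a (b-1) h1 (by omega) (by omega)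
    _ < slopeNP X Y b := by
        have := hslope (b-1) (by omega) (by omega)
        rwa [show b - 1 + 1 = b by omega] at this

lemma npStepDown : ∀ j, 1 ≤ j → j + 1 ≤ t → ∀ z, z ≤ X j →
    lineNP X Y (j+1) z ≤ lineNP X Y j z := by
  intro j h1 h2 z hz
  have ha := npLineAlt (Y := Y) hX j h1 (by omega) z
  have hsl := hslope j h1 (by omega)
  have : lineNP X Y (j+1) z = Y j + slopeNP X Y (j+1) * (z - X j) := by
    simp only [lineNP, Nat.add_sub_cancel]
  rw [this, ha]
  nlinarith [hsl, hz]

lemma npStepUp : ∀ j, 1 ≤ j → j + 1 ≤ t → ∀ z, X j ≤ z →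
    lineNP X Y j z ≤ lineNP X Y (j+1) z := by
  intro j h1 h2 z hz
  have ha := npLineAlt (Y := Y) hX j h1 (by omega) z
  have hsl := hslope j h1 (by omega)
  have : lineNP X Y (j+1) z = Y j + slopeNP X Y (j+1) * (z - X j) := by
    simp only [lineNP, Nat.add_sub_cancel]
  rw [this, ha]
  nlinarith [hsl, hz]

lemma npChainDown : ∀ a, 1 ≤ a → ∀ b, a ≤ b → b ≤ t → ∀ z, z ≤ X a →
    lineNP X Y b z ≤ lineNP X Y a z := by
  intro a ha b
  induction b with
  | zero => intro h; omega
  | succ b ih =>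
      intro hab hbt z hz
      rcases Nat.le_succ_iff.mp hab with h | h
      · calc lineNP X Y (b+1) z ≤ lineNP X Y b z := by
              apply npStepDown hX hslope b (by omega) hbt z
              exact le_trans hz (npXmono hX a b h (by omega))
          _ ≤ lineNP X Y a z := ih h (by omega) z hz
      · rw [h]

lemma npChainUp : ∀ a, 1 ≤ a → ∀ b, a ≤ b → b ≤ t → ∀ z, X (b-1) ≤ z →
    lineNP X Y a z ≤ lineNP X Y b z := by
  intro a ha b
  induction b with
  | zero => intro h; omega
  | succ b ih =>
      intro hab hbt z hz
      rw [Nat.add_sub_cancel] at hz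
      rcases Nat.le_succ_iff.mp hab with h | h
      · calc lineNP X Y a z ≤ lineNP X Y b z := by
              apply ih h (by omega) z
              exact le_trans (npXmono hX (b-1) b (by omega) (by omega)) hz
          _ ≤ lineNP X Y (b+1) z := npStepUp hX hslope b (by omega) hbt z hz
      · rw [h]

/-- every edge-line lies below any point of the diagram lying above the polygon -/
lemma npGLB (ht : 1 ≤ t) (z v : ℚ) (hz0 : X 0 ≤ z) (hzt : z ≤ X t)
    (hpt : ∀ s, 1 ≤ s → s ≤ t → X (s-1) ≤ z → z ≤ X s → lineNP X Y s z ≤ v) :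
    ∀ s, 1 ≤ s → s ≤ t → lineNP X Y s z ≤ v := by
  intro s hs1 hst
  classical
  have hPex : ∃ j, z ≤ X (j+1) := ⟨t-1, by rwa [Nat.sub_add_cancel ht]⟩
  set j := Nat.find hPex with hjdef
  have hjz' : z ≤ X (j+1) := Nat.find_spec hPex
  have hjmin : ∀ j' < j, ¬ (z ≤ X (j'+1)) := fun j' hj' => Nat.find_min hPex hj'
  have hjt : j ≤ t - 1 := Nat.find_min' hPex (by rwa [Nat.sub_add_cancel ht])
  set s' := j + 1 with hs'
  have hjz : z ≤ X s' := hjz'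
  have hs'le : s' ≤ t := by omega
  have hzX : X (s'-1) ≤ z := by
    rcases Nat.eq_zero_or_pos j with hj0 | hj0
    · simp only [hs', hj0]; simpa using hz0
    · have := hjmin (j-1) (by omega)
      push_neg at this
      have hj1 : j - 1 + 1 = j := by omega
      rw [hj1] at this
      simpa [hs'] using le_of_lt this
  have hbase := hpt s' (by omega) hs'le hzX hjz
  rcases le_or_gt s s' with h | h
  · exact le_trans (npChainUp hX hslope s hs1 s' h hs'le z hzX) hbase
  · exact le_trans (npChainDown hX hslope s' (by omega) s (le_of_lt h) hst z hjz) hbase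

end Geometry

set_option maxHeartbeats 2000000 in
/-- Theorem 1.2 (main thm 1): stretching of the Newton polygon under
composition with iterates. -/
theorem newton_polygon_comp_iterate
    (p : ℕ) (hp : p.Prime)
    (g f : Polynomial ℚ) (e d t : ℕ) (m : ℕ → ℕ)
    (hge : g.natDegree = e) (he1 : 1 ≤ e)
    (hb0 : g.coeff 0 ≠ 0)
    (hbe : padicValRat p (g.coeff e) = 0)
    (hbi : ∀ i, i < e → g.coeff i ≠ 0 → 1 ≤ padicValRat p (g.coeff i))
    (hm0 : m 0 = e) (hmt : m t = 0)
    (hmdec : ∀ s, s < t → m (s + 1) < m s)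
    (hNPg : HasNPVertices p g t (fun s => e - m s) (fun s => nuQ p (g.coeff (m s))))
    (hfd : f.natDegree = d) (hd1 : 1 ≤ d)
    (had : padicValRat p (f.coeff d) = 0)
    (lam : ℚ)
    (hlam : IsLeast {q : ℚ | ∃ i, i < d ∧ f.coeff i ≠ 0 ∧
      q = nuQ p (f.coeff i) / ((d : ℚ) - (i : ℚ))} lam)
    (lam1 : ℚ)
    (hlam1 : lam1 = nuQ p (g.coeff (m 1)) / ((e : ℚ) - (m 1 : ℚ)))
    (hlamge : lam1 ≤ lam)
    (hcase :
      nuQ p (g.coeff 0) < lam1 * ((d : ℚ) + (e : ℚ) - 1) ∨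
      (nuQ p (g.coeff 0) = lam1 * ((d : ℚ) + (e : ℚ) - 1) ∧
        (f.eval 0 = 0 ∨ (d : ℚ) * lam < nuQ p (f.eval 0) ∨ lam1 < lam))) :
    ∀ n : ℕ, 1 ≤ n →
      HasNPVertices p (g.comp (polyIter f n)) t
        (fun s => d ^ n * (e - m s)) (fun s => nuQ p (g.coeff (m s))) := by
  haveI : Fact p.Prime := ⟨hp⟩
  -- basic monotonicity facts about `m`
  have hmanti : ∀ b, b ≤ t → ∀ a, a ≤ b → m b ≤ m a := by
    intro b
    induction b with
    | zero => intro _ a ha; have : a = 0 := by omega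
              rw [this]
    | succ b ih =>
        intro hbt a hab
        rcases Nat.le_succ_iff.mp hab with h | h
        · exact le_trans (le_of_lt (hmdec b (by omega))) (ih (by omega) a h)
        · rw [h]
  have hmstrict : ∀ a b, a < b → b ≤ t → m b < m a := by
    intro a b hab hbt
    exact lt_of_le_of_lt (hmanti b hbt (a+1) hab) (hmdec a (by omega))
  have hmle : ∀ s, s ≤ t → m s ≤ e := by
    intro s hs
    have := hmanti s hs 0 (Nat.zero_le s)
    omega
  have ht1 : 1 ≤ t := by
    by_contra h
    have h0 : t = 0 := by omega
    rw [h0, hm0] at hmt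
    omega
  -- local abbreviations
  set Xf : ℕ → ℚ := fun s => (e:ℚ) - (m s:ℚ) with hXf
  set Yf : ℕ → ℚ := fun s => nuQ p (g.coeff (m s)) with hYf
  obtain ⟨hg0, hgx0, hgxt, hgxinc, hgvert, hgslope, hgabove⟩ := hNPg
  have hXcast : ∀ s, s ≤ t → ((e - m s : ℕ) : ℚ) = Xf s := by
    intro s hs
    simp only [hXf]
    rw [Nat.cast_sub (hmle s hs)]
  have hgco : ∀ s, s ≤ t → g.coeff (m s) ≠ 0 := by
    intro s hs
    have h5 : g.coeff (g.natDegree - (e - m s)) ≠ 0 := (hgvert s hs).1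
    rwa [hge, Nat.sub_sub_self (hmle s hs)] at h5
  have hXinc : ∀ s, s < t → Xf s < Xf (s+1) := by
    intro s hs
    have h1 := hmdec s hs
    have h2 : (m (s+1):ℚ) < (m s:ℚ) := by exact_mod_cast h1
    simp only [hXf]
    linarith
  have hslope' : ∀ s, 1 ≤ s → s < t → slopeNP Xf Yf s < slopeNP Xf Yf (s+1) := by
    intro s hs1 hst
    have h6 : (Yf s - Yf (s-1)) / (((e - m s : ℕ):ℚ) - ((e - m (s-1) : ℕ):ℚ)) <
        (Yf (s+1) - Yf s) / (((e - m (s+1) : ℕ):ℚ) - ((e - m s : ℕ):ℚ)) :=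
      hgslope s hs1 hst
    rw [hXcast s (by omega), hXcast (s-1) (by omega), hXcast (s+1) (by omega)] at h6
    simpa only [slopeNP, Nat.add_sub_cancel] using h6
  -- global line bound for the polygon of g
  have hglb : ∀ i, i ≤ e → g.coeff i ≠ 0 → ∀ s, 1 ≤ s → s ≤ t →
      lineNP Xf Yf s ((e:ℚ) - (i:ℚ)) ≤ nuQ p (g.coeff i) := by
    intro i hie hci
    have hiq : (i:ℚ) ≤ (e:ℚ) := by exact_mod_cast hie
    apply npGLB hXinc hslope' ht1 ((e:ℚ) - (i:ℚ)) _ ?_ ?_ ?_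
    · simp only [hXf, hm0]; linarith
    · simp only [hXf, hmt]; push_cast; linarith [Nat.cast_nonneg (α := ℚ) i]
    · intro s hs1 hst hle1 hle2
      have hi1 : i ≤ m (s-1) := by
        have : (i:ℚ) ≤ (m (s-1):ℚ) := by simp only [hXf] at hle1; linarith
        exact_mod_cast this
      have hi2 : m s ≤ i := by
        have : (m s:ℚ) ≤ (i:ℚ) := by simp only [hXf] at hle2; linarith
        exact_mod_cast this
      have h7 := hgabove s hs1 hst i hci
        (by rw [hge]; exact Nat.sub_le_sub_left hi1 e)
        (by rw [hge]; exact Nat.sub_le_sub_left hi2 e)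
      rw [hge] at h7
      rw [hXcast s hst, hXcast (s-1) (by omega), Nat.cast_sub hie] at h7
      simpa only [lineNP, slopeNP] using h7
  -- facts about lam1 and the slopes
  have hY0 : Yf 0 = 0 := by
    simp only [hYf, hm0, nuQ, hbe, Int.cast_zero]
  have hX0 : Xf 0 = 0 := by simp [hXf, hm0]
  have hm1lt : m 1 < e := by
    have := hmstrict 0 1 one_pos ht1
    omega
  have hsl1 : slopeNP Xf Yf 1 = lam1 := by
    simp only [slopeNP, Nat.sub_self, hY0, hX0, sub_zero]
    rw [hlam1]
  have hlam1pos : 0 < lam1 := by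
    have h1 : (1:ℤ) ≤ padicValRat p (g.coeff (m 1)) := hbi (m 1) hm1lt (hgco 1 ht1)
    have h2 : (1:ℚ) ≤ Yf 1 := by
      simp only [hYf, nuQ]
      exact_mod_cast h1
    have h3 : (0:ℚ) < (e:ℚ) - (m 1:ℚ) := by
      have : (m 1:ℚ) < (e:ℚ) := by exact_mod_cast hm1lt
      linarith
    rw [hlam1]
    exact div_pos (by simp only [hYf] at h2; linarith) h3
  have hlampos : 0 < lam := lt_of_lt_of_le hlam1pos hlamge
  have hdq : (1:ℚ) ≤ (d:ℚ) := by exact_mod_cast hd1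
  have hYt : Yf t = nuQ p (g.coeff 0) := by simp [hYf, hmt]
  have hXt : Xf t = (e:ℚ) := by simp [hXf, hmt]
  have hmt1pos : 1 ≤ m (t-1) := by
    have := hmstrict (t-1) t (by omega) le_rfl
    omega
  have hYt1 : lam1 * Xf (t-1) ≤ Yf (t-1) := by
    have h := hglb (m (t-1)) (hmle _ (by omega)) (hgco (t-1) (by omega)) 1 le_rfl ht1
    have hz : (e:ℚ) - (m (t-1):ℚ) = Xf (t-1) := by simp [hXf]
    rw [hz] at h
    have h2 : Yf 0 + slopeNP Xf Yf 1 * (Xf (t-1) - Xf 0) ≤ Yf (t-1) := h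
    rw [hY0, hX0, hsl1] at h2
    linarith
  have hMq : (1:ℚ) ≤ (m (t-1):ℚ) := by exact_mod_cast hmt1pos
  have hXt1 : Xf t - Xf (t-1) = (m (t-1):ℚ) := by
    simp only [hXf, hmt]; push_cast; ring
  have hdenpos : (0:ℚ) < Xf t - Xf (t-1) := by rw [hXt1]; linarith
  have hslt_le : nuQ p (g.coeff 0) ≤ lam1 * ((d:ℚ) + (e:ℚ) - 1) →
      slopeNP Xf Yf t ≤ lam1 * (d:ℚ) := by
    intro hYtle
    rw [← hYt] at hYtle
    rw [slopeNP, div_le_iff₀ hdenpos, hXt1]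
    have hXfte : Xf (t-1) = (e:ℚ) - (m (t-1):ℚ) := by simp [hXf]
    rw [hXfte] at hYt1
    nlinarith [mul_nonneg (mul_nonneg hlam1pos.le (by linarith : (0:ℚ) ≤ (d:ℚ) - 1))
      (by linarith : (0:ℚ) ≤ (m (t-1):ℚ) - 1)]
  have hslt_lt : nuQ p (g.coeff 0) < lam1 * ((d:ℚ) + (e:ℚ) - 1) →
      slopeNP Xf Yf t < lam1 * (d:ℚ) := by
    intro hYtlt
    rw [← hYt] at hYtlt
    rw [slopeNP, div_lt_iff₀ hdenpos, hXt1]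
    have hXfte : Xf (t-1) = (e:ℚ) - (m (t-1):ℚ) := by simp [hXf]
    rw [hXfte] at hYt1
    nlinarith [mul_nonneg (mul_nonneg hlam1pos.le (by linarith : (0:ℚ) ≤ (d:ℚ) - 1))
      (by linarith : (0:ℚ) ≤ (m (t-1):ℚ) - 1)]
  have hcase_le : nuQ p (g.coeff 0) ≤ lam1 * ((d:ℚ) + (e:ℚ) - 1) := by
    rcases hcase with h | ⟨h, _⟩
    · exact le_of_lt h
    · exact le_of_eq h
  have hsltd : slopeNP Xf Yf t ≤ lam1 * (d:ℚ) := hslt_le hcase_le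
  have hl1dled : lam1 * (d:ℚ) ≤ lam * (d:ℚ) :=
    mul_le_mul_of_nonneg_right hlamge (by linarith)
  have hsleΛ : ∀ s, 1 ≤ s → s ≤ t → slopeNP Xf Yf s ≤ lam * (d:ℚ) := by
    intro s hs1 hst
    exact le_trans (npSlopeMono hXinc hslope' s t hs1 hst le_rfl) (le_trans hsltd hl1dled)
  have hsltΛ : ∀ s, 1 ≤ s → s < t → slopeNP Xf Yf s < lam * (d:ℚ) := by
    intro s hs1 hst
    exact lt_of_lt_of_le (npSlopeMonoStrict hXinc hslope' s t hs1 hst le_rfl)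
      (le_trans hsltd hl1dled)
  -- coefficient bound for f
  have hfAV : ∀ j : ℕ, AV p (lam * ((d:ℚ) - (j:ℚ))) (f.coeff j) := by
    intro j
    rcases lt_trichotomy j d with h | h | h
    · by_cases hc : f.coeff j = 0
      · exact Or.inl hc
      · right
        have hmem : nuQ p (f.coeff j) / ((d:ℚ) - (j:ℚ)) ∈
            {q : ℚ | ∃ i, i < d ∧ f.coeff i ≠ 0 ∧ q = nuQ p (f.coeff i) / ((d:ℚ) - (i:ℚ))} :=
          ⟨j, h, hc, rfl⟩
        have hle := hlam.2 hmem
        have hpos : (0:ℚ) < (d:ℚ) - (j:ℚ) := by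
          have : (j:ℚ) < (d:ℚ) := by exact_mod_cast h
          linarith
        rw [le_div_iff₀ hpos] at hle
        linarith
    · right
      rw [h]
      simp only [sub_self, mul_zero]
      rw [show nuQ p (f.coeff d) = ((padicValRat p (f.coeff d) : ℤ):ℚ) from rfl, had]
      simp
    · left
      exact coeff_eq_zero_of_natDegree_lt (by rw [hfd]; exact h)
  have hfl : nuQ p f.leadingCoeff = 0 := by
    rw [show f.leadingCoeff = f.coeff f.natDegree from rfl, hfd]
    rw [show nuQ p (f.coeff d) = ((padicValRat p (f.coeff d) : ℤ):ℚ) from rfl, had]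
    simp
  -- now fix n
  intro n hn
  obtain ⟨hFdeg, hFlead, hFB⟩ := iter_bound hfd hd1 hlampos.le hfAV hfl n hn
  have hD1 : 1 ≤ d^n := Nat.one_le_pow n d (by omega)
  have hDq : (0:ℚ) < ((d^n : ℕ):ℚ) := by exact_mod_cast hD1
  have hFne : polyIter f n ≠ 0 := by
    intro h; rw [h, natDegree_zero] at hFdeg; omega
  have hFlc : (polyIter f n).leadingCoeff ≠ 0 := leadingCoeff_ne_zero.2 hFne
  have hGdeg : (g.comp (polyIter f n)).natDegree = d^n * e := by
    rw [natDegree_comp, hge, hFdeg, Nat.mul_comm]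
  have hsubid : ∀ s, s ≤ t → d^n * e - d^n * (e - m s) = d^n * m s := by
    intro s hs
    have h := hmle s hs
    rw [Nat.mul_sub, Nat.sub_sub_self (Nat.mul_le_mul_left _ h)]
  have hsum : ∀ k : ℕ, (g.comp (polyIter f n)).coeff k =
      ∑ i ∈ Finset.range (e+1), g.coeff i * ((polyIter f n)^i).coeff k := by
    intro k
    rw [comp_coeff_sum, hge]
  -- the KEY fact about the constant term of the iterate
  have hKEY : (polyIter f n).coeff 0 = 0 ∨
      slopeNP Xf Yf t < nuQ p ((polyIter f n).coeff 0) := by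
    by_cases hF0 : (polyIter f n).coeff 0 = 0
    · exact Or.inl hF0
    right
    have hF0v : lam * (d:ℚ) ≤ nuQ p ((polyIter f n).coeff 0) := by
      have h := hFB 0
      rcases h with h | h
      · exact absurd h hF0
      · have heq : (lam * (d:ℚ) / ((d^n : ℕ):ℚ)) * (((d^n : ℕ):ℚ) - ((0:ℕ):ℚ)) = lam * (d:ℚ) := by
          field_simp
          simp
        rwa [heq] at h
    rcases hcase with hlt | ⟨heq, hsub⟩
    · exact lt_of_lt_of_le (lt_of_lt_of_le (hslt_lt hlt) hl1dled) hF0v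
    · rcases hsub with hf0 | hfv | hl1l
      · have hSA := iter_const hfd hd1 hlampos.le hfAV
          (Or.inl (by rwa [coeff_zero_eq_eval_zero])) n hn
        rcases hSA with h | h
        · exact absurd h hF0
        · calc slopeNP Xf Yf t ≤ lam1 * (d:ℚ) := hsltd
            _ ≤ lam * (d:ℚ) := hl1dled
            _ = (d:ℚ) * lam := mul_comm _ _
            _ < _ := h
      · have hSA := iter_const hfd hd1 hlampos.le hfAV
          (Or.inr (by rwa [coeff_zero_eq_eval_zero])) n hn
        rcases hSA with h | h
        · exact absurd h hF0
        · calc slopeNP Xf Yf t ≤ lam1 * (d:ℚ) := hsltd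
            _ ≤ lam * (d:ℚ) := hl1dled
            _ = (d:ℚ) * lam := mul_comm _ _
            _ < _ := h
      · calc slopeNP Xf Yf t ≤ lam1 * (d:ℚ) := hsltd
          _ < lam * (d:ℚ) := mul_lt_mul_of_pos_right hl1l (by linarith)
          _ ≤ _ := hF0v
  -- exact valuations at the vertices
  have hvertexG : ∀ s, s ≤ t → (g.comp (polyIter f n)).coeff (d^n * m s) ≠ 0 ∧
      nuQ p ((g.comp (polyIter f n)).coeff (d^n * m s)) = Yf s := by
    intro s hs
    rw [hsum (d^n * m s)]
    have hdegpow : ((polyIter f n)^(m s)).natDegree = d^n * m s := by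
      rw [natDegree_pow, hFdeg, Nat.mul_comm]
    have hmain : ((polyIter f n)^(m s)).coeff (d^n * m s) =
        (polyIter f n).leadingCoeff ^ (m s) := by
      rw [← hdegpow, coeff_natDegree, leadingCoeff_pow]
    apply exact_sum _ _ (m s) (Finset.mem_range.2 (by have := hmle s hs; omega))
    · rw [hmain]
      exact mul_ne_zero (hgco s hs) (pow_ne_zero _ hFlc)
    · rw [hmain, nuQ_mul (hgco s hs) (pow_ne_zero _ hFlc), nuQ_pow hFlc, hFlead]
      simp [hYf]
    · intro i hi hne
      have hie : i ≤ e := by have := Finset.mem_range.mp hi; omega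
      rcases lt_or_gt_of_ne hne with hlt | hgt
      · -- i < m s : the coefficient of F^i in degree d^n * m s vanishes
        left
        have : ((polyIter f n)^i).natDegree < d^n * m s := by
          rw [natDegree_pow, hFdeg]
          calc i * d^n < m s * d^n := (mul_lt_mul_iff_left₀ (by omega : 0 < d^n)).2 hlt
            _ = d^n * m s := Nat.mul_comm _ _
        rw [coeff_eq_zero_of_natDegree_lt this, mul_zero]
      · -- i > m s
        have hs1 : 1 ≤ s := by
          by_contra h
          have : s = 0 := by omega
          rw [this, hm0] at hgt
          omega
        by_cases hbzero : g.coeff i = 0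
        · left; rw [hbzero, zero_mul]
        rcases eq_or_lt_of_le hs with hseq | hslt
        · -- s = t : constant term
          subst hseq
          have hkz : d^n * m s = 0 := by rw [hmt, Nat.mul_zero]
          rw [hkz]
          have hc0 : ((polyIter f n)^i).coeff 0 = ((polyIter f n).coeff 0)^i := by
            rw [coeff_zero_eq_eval_zero, eval_pow, ← coeff_zero_eq_eval_zero]
          rw [hc0]
          rcases hKEY with hF0 | hF0v
          · left
            rw [hF0, zero_pow (by omega : i ≠ 0), mul_zero]
          · right
            have hsltpos : 0 < slopeNP Xf Yf s :=
              lt_of_lt_of_le hlam1pos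
                (by rw [← hsl1]; exact npSlopeMono hXinc hslope' 1 s le_rfl ht1 le_rfl)
            have hF0ne : (polyIter f n).coeff 0 ≠ 0 := by
              intro h
              rw [h] at hF0v
              have : nuQ p 0 = 0 := by simp [nuQ, padicValRat.zero]
              rw [this] at hF0v
              linarith
            rw [nuQ_mul hbzero (pow_ne_zero _ hF0ne), nuQ_pow hF0ne]
            have hgb := hglb i hie hbzero s ht1 le_rfl
            have hgb' : Yf s - slopeNP Xf Yf s * (i:ℚ) ≤ nuQ p (g.coeff i) := by
              rw [npLineAlt hXinc s ht1 le_rfl, hXt] at hgb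
              have hzz : ((e:ℚ) - (i:ℚ)) - (e:ℚ) = -(i:ℚ) := by ring
              rw [hzz] at hgb
              linarith [hgb]
            have him : (1:ℚ) ≤ (i:ℚ) := by
              have : 1 ≤ i := by omega
              exact_mod_cast this
            nlinarith [mul_pos (sub_pos.2 hF0v) (by linarith : (0:ℚ) < (i:ℚ))]
        · -- 1 ≤ s < t
          by_cases hC : ((polyIter f n)^i).coeff (d^n * m s) = 0
          · left; rw [hC, mul_zero]
          right
          have hpow := pow_coeff_AV (μ := lam * (d:ℚ) / ((d^n : ℕ):ℚ))
            (div_nonneg (mul_nonneg hlampos.le (by positivity)) hDq.le) hFB i (d^n * m s)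
          rcases hpow with h | h
          · exact absurd h hC
          have hcast : ((d^n * m s : ℕ):ℚ) = ((d^n : ℕ):ℚ) * (m s:ℚ) := by push_cast; ring
          have heq2 : (lam * (d:ℚ) / ((d^n : ℕ):ℚ)) * ((i:ℚ) * ((d^n : ℕ):ℚ) - ((d^n * m s : ℕ):ℚ))
              = lam * (d:ℚ) * ((i:ℚ) - (m s:ℚ)) := by
            rw [hcast]
            field_simp
          rw [heq2] at h
          have hgb := hglb i hie hbzero s hs1 (le_of_lt hslt)
          have hgb' : Yf s - slopeNP Xf Yf s * ((i:ℚ) - (m s:ℚ)) ≤ nuQ p (g.coeff i) := by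
            rw [npLineAlt hXinc s hs1 (le_of_lt hslt)] at hgb
            have : ((e:ℚ) - (i:ℚ)) - Xf s = -((i:ℚ) - (m s:ℚ)) := by
              simp only [hXf]; ring
            rw [this] at hgb
            linarith [hgb]
          have hsl := hsltΛ s hs1 hslt
          have him : (1:ℚ) ≤ (i:ℚ) - (m s:ℚ) := by
            have : m s + 1 ≤ i := hgt
            have h2 : ((m s : ℕ):ℚ) + 1 ≤ (i:ℚ) := by exact_mod_cast this
            linarith
          rw [nuQ_mul hbzero hC]
          nlinarith [mul_pos (sub_pos.2 hsl) (by linarith : (0:ℚ) < (i:ℚ) - (m s:ℚ))]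
  have hslopeGeq : ∀ a b : ℕ, a ≤ t → b ≤ t →
      (Yf b - Yf a) / ((((d^n*(e - m b)):ℕ):ℚ) - (((d^n*(e - m a)):ℕ):ℚ)) =
      ((Yf b - Yf a) / (Xf b - Xf a)) / ((d^n:ℕ):ℚ) := by
    intro a b hat hbt
    rw [Nat.cast_mul, Nat.cast_mul, hXcast b hbt, hXcast a hat,
      show ((d^n:ℕ):ℚ)*Xf b - ((d^n:ℕ):ℚ)*Xf a = (Xf b - Xf a) * ((d^n:ℕ):ℚ) by ring,
      ← div_div]
  -- the seven components
  refine ⟨?_, ?_, ?_, ?_, ?_, ?_, ?_⟩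
  · -- constant coefficient nonzero
    have h := (hvertexG t le_rfl).1
    rwa [hmt, Nat.mul_zero] at h
  · show d^n * (e - m 0) = 0
    rw [hm0, Nat.sub_self, Nat.mul_zero]
  · show d^n * (e - m t) = (g.comp (polyIter f n)).natDegree
    rw [hmt, Nat.sub_zero, hGdeg]
  · intro s hst
    show d^n * (e - m s) < d^n * (e - m (s+1))
    have h1 := hmdec s hst
    have h2 := hmle s (le_of_lt hst)
    have h3 : e - m s < e - m (s+1) := by omega
    exact (mul_lt_mul_iff_right₀ (by omega : 0 < d^n)).2 h3
  · intro s hs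
    show (g.comp (polyIter f n)).coeff ((g.comp (polyIter f n)).natDegree - d^n * (e - m s)) ≠ 0 ∧
      nuQ p ((g.comp (polyIter f n)).coeff ((g.comp (polyIter f n)).natDegree - d^n * (e - m s))) =
        nuQ p (g.coeff (m s))
    rw [hGdeg, hsubid s hs]
    exact hvertexG s hs
  · -- slopes strictly increasing
    intro s hs1 hst
    show (Yf s - Yf (s-1)) / ((((d^n*(e - m s)):ℕ):ℚ) - (((d^n*(e - m (s-1))):ℕ):ℚ)) <
        (Yf (s+1) - Yf s) / ((((d^n*(e - m (s+1))):ℕ):ℚ) - (((d^n*(e - m s)):ℕ):ℚ))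
    rw [hslopeGeq (s-1) s (by omega) (by omega), hslopeGeq s (s+1) (by omega) (by omega)]
    have h6 : slopeNP Xf Yf s < slopeNP Xf Yf (s+1) := hslope' s hs1 hst
    have h6' : (Yf s - Yf (s-1))/(Xf s - Xf (s-1)) < (Yf (s+1) - Yf s)/(Xf (s+1) - Xf s) := by
      simpa only [slopeNP, Nat.add_sub_cancel] using h6
    have := mul_lt_mul_of_pos_right h6' (inv_pos.2 hDq)
    simpa [div_eq_mul_inv] using this
  · -- points above the polygon
    intro s hs1 hst k hck hk1 hk2
    have hkle : k ≤ d^n * e := by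
      have := le_natDegree_of_ne_zero hck
      rwa [hGdeg] at this
    show Yf (s-1) + ((Yf s - Yf (s-1)) /
        ((((d^n*(e - m s)):ℕ):ℚ) - (((d^n*(e - m (s-1))):ℕ):ℚ))) *
        ((((g.comp (polyIter f n)).natDegree - k : ℕ):ℚ) - (((d^n*(e - m (s-1))):ℕ):ℚ)) ≤
        nuQ p ((g.comp (polyIter f n)).coeff k)
    rw [hslopeGeq (s-1) s (by omega) (by omega), hGdeg, Nat.cast_sub hkle, Nat.cast_mul,
      Nat.cast_mul, hXcast (s-1) (by omega)]
    have hsl_show : (Yf s - Yf (s-1))/(Xf s - Xf (s-1)) = slopeNP Xf Yf s := rfl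
    rw [hsl_show]
    have hDq0 : ((d^n:ℕ):ℚ) ≠ 0 := ne_of_gt hDq
    have hLt : slopeNP Xf Yf s / ((d^n:ℕ):ℚ) *
        ((((d^n:ℕ):ℚ)*(e:ℚ) - (k:ℚ)) - ((d^n:ℕ):ℚ)*Xf (s-1)) =
        slopeNP Xf Yf s * (((e:ℚ) - (k:ℚ)/((d^n:ℕ):ℚ)) - Xf (s-1)) := by
      field_simp
    rw [hLt]
    have hAV : AV p (Yf (s-1) + slopeNP Xf Yf s * (((e:ℚ) - (k:ℚ)/((d^n:ℕ):ℚ)) - Xf (s-1)))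
        ((g.comp (polyIter f n)).coeff k) := by
      rw [hsum k]
      apply AV_sum
      intro i hi
      by_cases hb : g.coeff i = 0
      · left; rw [hb, zero_mul]
      by_cases hC : ((polyIter f n)^i).coeff k = 0
      · left; rw [hC, mul_zero]
      right
      have hie : i ≤ e := by have := Finset.mem_range.mp hi; omega
      have hkiD : k ≤ i * d^n := by
        have := le_natDegree_of_ne_zero hC
        rwa [natDegree_pow, hFdeg] at this
      have hkiq : (k:ℚ) ≤ (i:ℚ) * ((d^n:ℕ):ℚ) := by exact_mod_cast hkiD
      have hwle : (k:ℚ)/((d^n:ℕ):ℚ) ≤ (i:ℚ) := by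
        rw [div_le_iff₀ hDq]; exact hkiq
      have h1 := hglb i hie hb s hs1 hst
      have h1' : Yf (s-1) + slopeNP Xf Yf s * (((e:ℚ) - (i:ℚ)) - Xf (s-1)) ≤
          nuQ p (g.coeff i) := by simpa only [lineNP] using h1
      have h2 : lam*(d:ℚ)*((i:ℚ) - (k:ℚ)/((d^n:ℕ):ℚ)) ≤
          nuQ p (((polyIter f n)^i).coeff k) := by
        have hpow := pow_coeff_AV (μ := lam*(d:ℚ)/((d^n:ℕ):ℚ))
          (div_nonneg (mul_nonneg hlampos.le (by positivity)) hDq.le) hFB i k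
        rcases hpow with h | h
        · exact absurd h hC
        have heqv : lam*(d:ℚ)/((d^n:ℕ):ℚ)*((i:ℚ)*((d^n:ℕ):ℚ) - (k:ℚ)) =
            lam*(d:ℚ)*((i:ℚ) - (k:ℚ)/((d^n:ℕ):ℚ)) := by
          field_simp
        rwa [heqv] at h
      have hsl := hsleΛ s hs1 hst
      rw [nuQ_mul hb hC]
      have hmono : slopeNP Xf Yf s * ((i:ℚ) - (k:ℚ)/((d^n:ℕ):ℚ)) ≤
          lam*(d:ℚ)*((i:ℚ) - (k:ℚ)/((d^n:ℕ):ℚ)) :=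
        mul_le_mul_of_nonneg_right hsl (sub_nonneg.2 hwle)
      calc Yf (s-1) + slopeNP Xf Yf s * (((e:ℚ) - (k:ℚ)/((d^n:ℕ):ℚ)) - Xf (s-1))
          = (Yf (s-1) + slopeNP Xf Yf s * (((e:ℚ) - (i:ℚ)) - Xf (s-1))) +
            slopeNP Xf Yf s * ((i:ℚ) - (k:ℚ)/((d^n:ℕ):ℚ)) := by ring
        _ ≤ nuQ p (g.coeff i) + nuQ p (((polyIter f n)^i).coeff k) :=
            add_le_add h1' (hmono.trans h2)
    rcases hAV with h | h
    · exact absurd h hck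
    · exact h
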